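/- Let N_A, N_B ≥ 1, let Ψ_ref ∈ ℂ^{N_A} be a unit vector, and let ψ_1, …, ψ_Q ∈ ℂ^{Fin N_A × Fin N_B} be unit vectors such that the dimension of the complex linear span of {ψ_1, …, ψ_Q} is at most N_B. Then there exist a unitary matrix U indexed by Fin N_A × Fin N_B and unit vectors φ_1, …, φ_Q ∈ ℂ^{N_B} such that U ψ_i = Ψ_ref ⊗ φ_i for every i; that is, a perfect quantum autoencoder can be achieved. -/

import Mathlib

open Matrix

/-- The tensor (Kronecker) product of vectors: `(x ⊗ y)(a,b) = x a * y b`. -/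
def tensorVec {NA NB : ℕ} (x : Fin NA → ℂ) (y : Fin NB → ℂ) :
    Fin NA × Fin NB → ℂ :=
  fun p => x p.1 * y p.2

lemma inner_tensorVec {NA NB : ℕ} (x x' : EuclideanSpace ℂ (Fin NA))
    (y y' : EuclideanSpace ℂ (Fin NB)) :
    inner (𝕜 := ℂ) (E := EuclideanSpace ℂ (Fin NA × Fin NB))
        (WithLp.toLp 2 (tensorVec x y)) (WithLp.toLp 2 (tensorVec x' y')) =
      inner (𝕜 := ℂ) x x' * inner (𝕜 := ℂ) y y' := by
  simp only [PiLp.inner_apply, RCLike.inner_apply, tensorVec]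
  rw [Finset.sum_mul_sum, Fintype.sum_prod_type]
  refine Finset.sum_congr rfl fun a _ => Finset.sum_congr rfl fun b _ => ?_
  show x' a * y' b * (starRingEnd ℂ) (x a * y b) =
      x' a * (starRingEnd ℂ) (x a) * (y' b * (starRingEnd ℂ) (y b))
  rw [_root_.map_mul]; ring

/-- Any orthonormal family indexed by `Fin (finrank S)` for a subspace `S` of a
finite-dimensional complex inner product space gives rise to a global linear isometry sending
the standard orthonormal basis of `S` to that family. -/
theorem auxIso {E : Type*} [NormedAddCommGroup E] [InnerProductSpace ℂ E]
    [FiniteDimensional ℂ E] (S : Submodule ℂ E)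
    (w : Fin (Module.finrank ℂ S) → E) (hw : Orthonormal ℂ w) :
    ∃ F : E →ₗᵢ[ℂ] E, ∀ s : S,
      F s = ∑ j, (stdOrthonormalBasis ℂ S).toBasis.equivFun s j • w j := by
  classical
  set B := stdOrthonormalBasis ℂ S with hB
  let f : S →ₗ[ℂ] E := B.toBasis.constr ℂ w
  have hBon : Orthonormal ℂ (⇑B.toBasis) := B.coe_toBasis ▸ B.orthonormal
  have hfon : Orthonormal ℂ (⇑f ∘ ⇑B.toBasis) := by
    have hc : (⇑f ∘ ⇑B.toBasis) = w := funext fun i => B.toBasis.constr_basis ℂ w i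
    rw [hc]; exact hw
  let L : S →ₗᵢ[ℂ] E := f.isometryOfOrthonormal hBon hfon
  refine ⟨L.extend, fun s => ?_⟩
  rw [L.extend_apply s]
  show f s = _
  rw [Module.Basis.constr_apply_fintype]

/-- If the complex linear span of the unit vectors `ψ_1, …, ψ_Q` has
dimension at most `N_B`, then there exist a unitary `U` and unit vectors `φ_i ∈ ℂ^{N_B}` such
that `U ψ_i = Ψ_ref ⊗ φ_i` for every `i`; i.e. a perfect quantum autoencoder is achievable. -/
theorem perfect_autoencoder_of_span_le_latent_dim
    (NA NB Q : ℕ) (hNA : 1 ≤ NA) (hNB : 1 ≤ NB)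
    (Ψref : Fin NA → ℂ) (href : star Ψref ⬝ᵥ Ψref = 1)
    (ψ : Fin Q → (Fin NA × Fin NB → ℂ))
    (hψ : ∀ i, star (ψ i) ⬝ᵥ ψ i = 1)
    (hspan : Module.finrank ℂ (Submodule.span ℂ (Set.range ψ)) ≤ NB) :
    ∃ U : Matrix (Fin NA × Fin NB) (Fin NA × Fin NB) ℂ,
      U * Uᴴ = 1 ∧ Uᴴ * U = 1 ∧
      ∀ i, ∃ φ : Fin NB → ℂ, star φ ⬝ᵥ φ = 1 ∧ U *ᵥ ψ i = tensorVec Ψref φ := by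
  classical
  let S : Submodule ℂ (EuclideanSpace ℂ (Fin NA × Fin NB)) :=
    Submodule.span ℂ (Set.range (fun i => WithLp.toLp 2 (ψ i)))
  have hdle : Module.finrank ℂ S ≤ NB := by
    have hS : S = (Submodule.span ℂ (Set.range ψ)).map
        (WithLp.linearEquiv 2 ℂ (Fin NA × Fin NB → ℂ)).symm.toLinearMap := by
      rw [Submodule.map_span, ← Set.range_comp]; rfl
    rw [hS, LinearEquiv.finrank_map_eq]; exact hspan
  let e : Fin (Module.finrank ℂ S) → EuclideanSpace ℂ (Fin NB) :=
    fun i => EuclideanSpace.single (Fin.castLE hdle i) 1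
  have he : Orthonormal ℂ e := by
    rw [orthonormal_iff_ite]
    intro i j
    simp [e, EuclideanSpace.inner_single_left, EuclideanSpace.single_apply,
      (Fin.castLE_injective hdle).eq_iff, eq_comm]
  have hrefI : inner (𝕜 := ℂ) (E := EuclideanSpace ℂ (Fin NA)) (WithLp.toLp 2 Ψref)
      (WithLp.toLp 2 Ψref) = 1 := by
    rw [EuclideanSpace.inner_toLp_toLp, dotProduct_comm]; exact href
  let w : Fin (Module.finrank ℂ S) → EuclideanSpace ℂ (Fin NA × Fin NB) :=
    fun i => WithLp.toLp 2 (tensorVec Ψref (e i))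
  have hw : Orthonormal ℂ w := by
    rw [orthonormal_iff_ite]
    intro i j
    rw [show inner (𝕜 := ℂ) (w i) (w j) = inner (𝕜 := ℂ) (E := EuclideanSpace ℂ (Fin NA))
        (WithLp.toLp 2 Ψref) (WithLp.toLp 2 Ψref)
        * inner (𝕜 := ℂ) (e i) (e j) from inner_tensorVec _ _ _ _, hrefI, one_mul]
    exact orthonormal_iff_ite.mp he i j
  obtain ⟨F, hFs⟩ := auxIso S w hw
  let U : Matrix (Fin NA × Fin NB) (Fin NA × Fin NB) ℂ :=
    LinearMap.toMatrix'
      ((WithLp.linearEquiv 2 ℂ (Fin NA × Fin NB → ℂ)).toLinearMap ∘ₗ F.toLinearMap ∘ₗ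
        (WithLp.linearEquiv 2 ℂ (Fin NA × Fin NB → ℂ)).symm.toLinearMap)
  have hUv : ∀ v : EuclideanSpace ℂ (Fin NA × Fin NB), U *ᵥ v.ofLp = (F v).ofLp := by
    intro v
    rw [← Matrix.toLin'_apply, Matrix.toLin'_toMatrix']
    rfl
  have hUent : ∀ p q, U p q = F (EuclideanSpace.single q 1) p := by
    intro p q
    have h2 : (U *ᵥ Pi.single q 1) p = F (EuclideanSpace.single q 1) p :=
      congrFun (hUv (EuclideanSpace.single q 1)) p
    rw [Matrix.mulVec_single] at h2
    simpa using h2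
  have hUdag : Uᴴ * U = 1 := by
    ext p q
    have key : ∀ u v : EuclideanSpace ℂ (Fin NA × Fin NB),
        (∑ k, (starRingEnd ℂ) (u k) * v k) = inner (𝕜 := ℂ) u v := by
      intro u v
      simp [PiLp.inner_apply, RCLike.inner_apply]
      exact Finset.sum_congr rfl fun _ _ => mul_comm _ _
    rw [Matrix.mul_apply]
    simp only [Matrix.conjTranspose_apply, hUent, RCLike.star_def]
    rw [key, F.inner_map_map, EuclideanSpace.inner_single_left]
    simp [EuclideanSpace.single_apply, Matrix.one_apply, eq_comm]
  refine ⟨U, mul_eq_one_comm.mpr hUdag, hUdag, ?_⟩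
  intro i
  have hmem : WithLp.toLp 2 (ψ i) ∈ S := Submodule.subset_span ⟨i, rfl⟩
  let c : Fin (Module.finrank ℂ S) → ℂ :=
    fun j => (stdOrthonormalBasis ℂ S).toBasis.equivFun ⟨WithLp.toLp 2 (ψ i), hmem⟩ j
  let φ : Fin NB → ℂ := fun b => ∑ j, c j * e j b
  have hF : U *ᵥ ψ i = tensorVec Ψref φ := by
    rw [show ψ i = (WithLp.toLp 2 (ψ i)).ofLp from rfl, hUv]
    have h1 : F (WithLp.toLp 2 (ψ i)) = ∑ j, c j • w j := hFs ⟨WithLp.toLp 2 (ψ i), hmem⟩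
    rw [h1]
    funext p
    show (∑ j, c j • w j) p = Ψref p.1 * φ p.2
    rw [WithLp.ofLp_sum, Finset.sum_apply]
    show (∑ j, c j * (Ψref p.1 * e j p.2)) = Ψref p.1 * ∑ j, c j * e j p.2
    rw [Finset.mul_sum]
    exact Finset.sum_congr rfl fun j _ => by ring
  have hφ : inner (𝕜 := ℂ) (E := EuclideanSpace ℂ (Fin NB)) (WithLp.toLp 2 φ)
      (WithLp.toLp 2 φ) = 1 := by
    have h3 : inner (𝕜 := ℂ) (E := EuclideanSpace ℂ (Fin NA × Fin NB))
        (WithLp.toLp 2 (tensorVec Ψref φ)) (WithLp.toLp 2 (tensorVec Ψref φ))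
        = inner (𝕜 := ℂ) (E := EuclideanSpace ℂ (Fin NB)) (WithLp.toLp 2 φ)
          (WithLp.toLp 2 φ) := by
      have := inner_tensorVec (WithLp.toLp 2 Ψref) (WithLp.toLp 2 Ψref) (WithLp.toLp 2 φ)
        (WithLp.toLp 2 φ)
      simp only [WithLp.ofLp_toLp] at this
      rw [this, hrefI, one_mul]
    have h4 : WithLp.toLp 2 (tensorVec Ψref φ) = F (WithLp.toLp 2 (ψ i)) := by
      rw [← hF]; exact congrArg (WithLp.toLp 2) (hUv (WithLp.toLp 2 (ψ i)))
    have h5 : inner (𝕜 := ℂ) (F (WithLp.toLp 2 (ψ i))) (F (WithLp.toLp 2 (ψ i)))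
        = inner (𝕜 := ℂ) (E := EuclideanSpace ℂ (Fin NA × Fin NB)) (WithLp.toLp 2 (ψ i))
          (WithLp.toLp 2 (ψ i)) :=
      F.inner_map_map _ _
    have h6 : inner (𝕜 := ℂ) (E := EuclideanSpace ℂ (Fin NA × Fin NB)) (WithLp.toLp 2 (ψ i))
        (WithLp.toLp 2 (ψ i)) = 1 := by
      rw [EuclideanSpace.inner_toLp_toLp, dotProduct_comm]; exact hψ i
    rw [← h3, h4, h5, h6]
  refine ⟨φ, ?_, hF⟩
  rw [EuclideanSpace.inner_toLp_toLp, dotProduct_comm] at hφ; exact hφ
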